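/- For ν ∈ {0,1} and N+ν a positive integer, Σ_{k=−N}^{N+ν} q^{2k²−k} [2N+ν choose N+k]_{q²} = (−q;q)_{2N+ν}. -/

import Mathlib

def IsDistinctPartition (π : List ℕ) : Prop :=
  π.Chain' (· > ·) ∧ ∀ p ∈ π, 0 < p

def IsPartition (π : List ℕ) : Prop :=
  π.Chain' (· ≥ ·) ∧ ∀ p ∈ π, 0 < p

def oddIdxOdd (π : List ℕ) : ℕ :=
  (π.zipIdx.filter fun p => p.2 % 2 == 0 && p.1 % 2 == 1).length

def evenIdxOdd (π : List ℕ) : ℕ :=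
  (π.zipIdx.filter fun p => p.2 % 2 == 1 && p.1 % 2 == 1).length

def bgRank (π : List ℕ) : ℤ := (oddIdxOdd π : ℤ) - evenIdxOdd π

def altSum : List ℕ → ℤ
  | [] => 0
  | a :: t => (a : ℤ) - altSum t

noncomputable def gaussPoly : ℕ → ℕ → Polynomial ℚ
  | _, 0 => 1
  | 0, _ + 1 => 0
  | m + 1, r + 1 => gaussPoly m r + Polynomial.X ^ (r + 1) * gaussPoly m (r + 1)

noncomputable def gaussZ (m : ℕ) (r : ℤ) : Polynomial ℚ :=
  if 0 ≤ r then gaussPoly m r.toNat else 0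

section Aux
open Polynomial Finset

lemma gp_zero (m : ℕ) : gaussPoly m 0 = 1 := by cases m <;> rfl

lemma gp_succ (m r : ℕ) : gaussPoly (m+1) (r+1) = gaussPoly m r + X ^ (r+1) * gaussPoly m (r+1) := rfl

lemma gp_of_lt : ∀ m r : ℕ, m < r → gaussPoly m r = 0 := by
  intro m
  induction m with
  | zero => intro r hr; match r, hr with | r+1, _ => rfl
  | succ m ih =>
    intro r hr
    match r, hr with
    | r+1, hr =>
      rw [gp_succ, ih r (by omega), ih (r+1) (by omega)]
      ring

lemma gp_diag : ∀ m : ℕ, gaussPoly m m = 1 := by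
  intro m
  induction m with
  | zero => rfl
  | succ m ih => rw [gp_succ, ih, gp_of_lt m (m+1) (by omega)]; ring

lemma gp_pascal2 : ∀ m r : ℕ, r ≤ m →
    gaussPoly (m+1) (r+1) = X ^ (m - r) * gaussPoly m r + gaussPoly m (r+1) := by
  intro m
  induction m with
  | zero =>
    intro r hr
    interval_cases r
    simp [gp_succ, gp_zero, gp_of_lt 0 1 (by omega)]
  | succ m ih =>
    intro r hr
    match r with
    | 0 =>
      have h1 : gaussPoly (m+2) 1 = 1 + X * gaussPoly (m+1) 1 := by
        rw [gp_succ, gp_zero]; ring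
      have h2 : gaussPoly (m+1) 1 = X ^ m + gaussPoly m 1 := by
        have := ih 0 (Nat.zero_le m); simpa [gp_zero] using this
      have h3 : gaussPoly (m+1) 1 = 1 + X * gaussPoly m 1 := by
        rw [gp_succ, gp_zero]; ring
      simp only [Nat.sub_zero, gp_zero, mul_one]
      linear_combination h1 + X * h2 - h3
    | s+1 =>
      rcases Nat.lt_or_ge s m with hs | hs
      · obtain ⟨t, rfl⟩ : ∃ t, m = s + t + 1 := ⟨m - s - 1, by omega⟩
        have e1 : gaussPoly (s+t+1+2) (s+2)
            = gaussPoly (s+t+2) (s+1) + X ^ (s+2) * gaussPoly (s+t+2) (s+2) := gp_succ _ _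
        have e2 : gaussPoly (s+t+2) (s+1)
            = X ^ (t+1) * gaussPoly (s+t+1) s + gaussPoly (s+t+1) (s+1) := by
          have := ih s (by omega)
          rw [show s+t+1-s = t+1 by omega] at this
          convert this using 3 <;> omega
        have e3 : gaussPoly (s+t+2) (s+2)
            = X ^ t * gaussPoly (s+t+1) (s+1) + gaussPoly (s+t+1) (s+2) := by
          have := ih (s+1) (by omega)
          rw [show s+t+1-(s+1) = t by omega] at this
          convert this using 3 <;> omega
        have e4 : gaussPoly (s+t+2) (s+1)
            = gaussPoly (s+t+1) s + X ^ (s+1) * gaussPoly (s+t+1) (s+1) := gp_succ _ _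
        have e5 : gaussPoly (s+t+2) (s+2)
            = gaussPoly (s+t+1) (s+1) + X ^ (s+2) * gaussPoly (s+t+1) (s+2) := gp_succ _ _
        rw [show s+t+1+1-(s+1) = t+1 by omega]
        have goal' : gaussPoly (s+t+1+2) (s+2)
            = X ^ (t+1) * gaussPoly (s+t+2) (s+1) + gaussPoly (s+t+2) (s+2) := by
          linear_combination e1 + e2 + X ^ (s+2) * e3 - X ^ (t+1) * e4 - e5
        convert goal' using 3 <;> omega
      · have : s = m := by omega
        subst this
        rw [gp_succ, gp_diag, gp_of_lt (s+1) (s+2) (by omega)]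
        simp [gp_of_lt s.succ s.succ.succ (by omega), gp_diag]

lemma gp_symm : ∀ m r : ℕ, r ≤ m → gaussPoly m (m - r) = gaussPoly m r := by
  intro m
  induction m with
  | zero => intro r hr; interval_cases r; rfl
  | succ m ih =>
    intro r hr
    match r with
    | 0 => simp [gp_zero, gp_diag]
    | s+1 =>
      rcases Nat.lt_or_ge (s+1) (m+1) with hs | hs
      · obtain ⟨t, rfl⟩ : ∃ t, m = s + t + 1 := ⟨m - s - 1, by omega⟩
        rw [show s+t+1+1-(s+1) = t+1 by omega]
        have d1 : gaussPoly (s+t+1+1) (t+1)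
            = gaussPoly (s+t+1) t + X ^ (t+1) * gaussPoly (s+t+1) (t+1) := gp_succ _ _
        have p2 : gaussPoly (s+t+1+1) (s+1)
            = X ^ (t+1) * gaussPoly (s+t+1) s + gaussPoly (s+t+1) (s+1) := by
          have := gp_pascal2 (s+t+1) s (by omega)
          rwa [show s+t+1-s = t+1 by omega] at this
        have i1 : gaussPoly (s+t+1) t = gaussPoly (s+t+1) (s+1) := by
          have := ih (s+1) (by omega); rwa [show s+t+1-(s+1) = t by omega] at this
        have i2 : gaussPoly (s+t+1) (t+1) = gaussPoly (s+t+1) s := by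
          have := ih s (by omega); rwa [show s+t+1-s = t+1 by omega] at this
        linear_combination d1 + X ^ (t+1) * i2 + i1 - p2
      · have : s = m := by omega
        subst this
        simp [gp_zero, gp_diag]

noncomputable def Ag (m r : ℕ) : Polynomial ℚ := Polynomial.aeval (X ^ 2 : Polynomial ℚ) (gaussPoly m r)

lemma Ag_zero (m : ℕ) : Ag m 0 = 1 := by simp [Ag, gp_zero]

lemma Ag_of_lt (m r : ℕ) (h : m < r) : Ag m r = 0 := by simp [Ag, gp_of_lt m r h]

lemma Ag_diag (m : ℕ) : Ag m m = 1 := by simp [Ag, gp_diag]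

lemma Ag_symm (m r : ℕ) (h : r ≤ m) : Ag m (m - r) = Ag m r := by rw [Ag, gp_symm m r h]; rfl

lemma Ag_succ (m r : ℕ) : Ag (m+1) (r+1) = Ag m r + X ^ (2*(r+1)) * Ag m (r+1) := by
  rw [Ag, gp_succ, map_add, map_mul, map_pow, aeval_X, ← pow_mul]; rfl

lemma Ag_pascal2 (m r : ℕ) (h : r ≤ m) :
    Ag (m+1) (r+1) = X ^ (2*(m-r)) * Ag m r + Ag m (r+1) := by
  rw [Ag, gp_pascal2 m r h, map_add, map_mul, map_pow, aeval_X, ← pow_mul]; rfl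

def Ez (N j : ℕ) : ℤ := 2*((j:ℤ) - N)^2 - ((j:ℤ) - N)

lemma Ez_nonneg (N j : ℕ) : 0 ≤ Ez N j := by
  unfold Ez
  set d : ℤ := (j:ℤ) - N
  rcases le_or_gt d 0 with h | h
  · nlinarith [sq_nonneg d]
  · nlinarith [sq_nonneg d]

noncomputable def S (m : ℕ) : Polynomial ℚ :=
    ∑ j ∈ Finset.range (m+1), X ^ (Ez (m/2) j).toNat * Ag m j

lemma S_zero : S 0 = 1 := by
  simp [S, Ez, Ag, gp_zero]

lemma stepOdd (N : ℕ) : S (2*N+1) = (1 + X ^ (2*N+1)) * S (2*N) := by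
  have hd1 : (2*N+1)/2 = N := by omega
  have hd0 : (2*N)/2 = N := by omega
  rw [S, S, hd1, hd0]
  have split : ∀ j ∈ Finset.range (2*N+2),
      X ^ (Ez N j).toNat * Ag (2*N+1) j
      = (if j = 0 then 0 else
          X ^ (Ez N j + 2*((2*N+1:ℤ) - (j:ℤ))).toNat * Ag (2*N) (j-1))
        + X ^ (Ez N j).toNat * Ag (2*N) j := by
    intro j hj
    match j with
    | 0 => simp [Ag_zero]
    | r+1 =>
      have hr : r ≤ 2*N := by simp only [Finset.mem_range] at hj; omega
      have hexp : (Ez N (r+1) + 2*((2*N+1:ℤ) - ((r+1:ℕ):ℤ))).toNat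
          = (Ez N (r+1)).toNat + 2*(2*N - r) := by
        have h0 := Ez_nonneg N (r+1)
        push_cast
        omega
      rw [Ag_pascal2 (2*N) r hr, if_neg (Nat.succ_ne_zero r), Nat.add_sub_cancel, hexp, pow_add]
      ring
  rw [Finset.sum_congr rfl split, Finset.sum_add_distrib]
  -- second sum = S (2*N)
  have h2 : ∑ j ∈ Finset.range (2*N+2), X ^ (Ez N j).toNat * Ag (2*N) j
      = ∑ j ∈ Finset.range (2*N+1), X ^ (Ez N j).toNat * Ag (2*N) j := by
    rw [Finset.sum_range_succ, Ag_of_lt (2*N) (2*N+1) (by omega)]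
    simp
  -- first sum
  have h1 : ∑ j ∈ Finset.range (2*N+2),
      (if j = 0 then 0 else
        X ^ (Ez N j + 2*((2*N+1:ℤ) - (j:ℤ))).toNat * Ag (2*N) (j-1))
      = X ^ (2*N+1) * ∑ j ∈ Finset.range (2*N+1), X ^ (Ez N j).toNat * Ag (2*N) j := by
    rw [Finset.sum_range_succ']
    rw [if_pos rfl, add_zero]
    have strip : ∀ j ∈ Finset.range (2*N+1),
        (if j+1 = 0 then 0 else
          X ^ (Ez N (j+1) + 2*((2*N+1:ℤ) - ((j+1:ℕ):ℤ))).toNat * Ag (2*N) (j+1-1))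
        = X ^ (Ez N (j+1) + 2*((2*N+1:ℤ) - ((j+1:ℕ):ℤ))).toNat * Ag (2*N) j := by
      intro j hj
      rw [if_neg (Nat.succ_ne_zero j), Nat.add_sub_cancel]
    rw [Finset.sum_congr rfl strip]
    rw [← Finset.sum_range_reflect (fun j => X ^ (Ez N (j+1) + 2*((2*N+1:ℤ) - ((j+1:ℕ):ℤ))).toNat * Ag (2*N) j) (2*N+1)]
    rw [Finset.mul_sum]
    apply Finset.sum_congr rfl
    intro j hj
    simp only [Finset.mem_range] at hj
    have hj' : j ≤ 2*N := by omega
    have hsub : 2*N+1-1-j = 2*N - j := by omega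
    rw [hsub, Ag_symm (2*N) j hj']
    have hcast : ((2*N - j + 1 : ℕ) : ℤ) = 2*N - (j:ℤ) + 1 := by push_cast [Nat.cast_sub hj']; ring
    have hexp : (Ez N (2*N - j + 1) + 2*((2*N+1:ℤ) - ((2*N - j + 1:ℕ):ℤ))).toNat
        = (2*N+1) + (Ez N j).toNat := by
      have heq : Ez N (2*N - j + 1) + 2*((2*N+1:ℤ) - ((2*N - j + 1:ℕ):ℤ))
          = Ez N j + (2*N+1 : ℕ) := by
        unfold Ez
        rw [hcast]
        push_cast
        ring
      rw [heq]
      have h0 := Ez_nonneg N j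
      omega
    rw [hexp, pow_add]
    ring
  rw [h1, h2]
  ring

lemma stepEven (N : ℕ) : S (2*N+2) = (1 + X ^ (2*N+2)) * S (2*N+1) := by
  have hd2 : (2*N+2)/2 = N+1 := by omega
  have hd1 : (2*N+1)/2 = N := by omega
  rw [S, S, hd2, hd1]
  have split : ∀ j ∈ Finset.range (2*N+3),
      X ^ (Ez (N+1) j).toNat * Ag (2*N+2) j
      = (if j = 0 then 0 else X ^ (Ez (N+1) j).toNat * Ag (2*N+1) (j-1))
        + X ^ (Ez (N+1) j + 2*(j:ℤ)).toNat * Ag (2*N+1) j := by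
    intro j hj
    match j with
    | 0 => simp [Ag_zero]
    | r+1 =>
      have hexp : (Ez (N+1) (r+1) + 2*((r+1:ℕ):ℤ)).toNat
          = (Ez (N+1) (r+1)).toNat + 2*(r+1) := by
        have h0 := Ez_nonneg (N+1) (r+1)
        push_cast
        omega
      rw [Ag_succ (2*N+1) r, if_neg (Nat.succ_ne_zero r), Nat.add_sub_cancel, hexp, pow_add]
      ring
  rw [Finset.sum_congr rfl split, Finset.sum_add_distrib]
  -- first sum = S(2N+1)
  have h1 : ∑ j ∈ Finset.range (2*N+3),
      (if j = 0 then 0 else X ^ (Ez (N+1) j).toNat * Ag (2*N+1) (j-1))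
      = ∑ j ∈ Finset.range (2*N+2), X ^ (Ez N j).toNat * Ag (2*N+1) j := by
    rw [Finset.sum_range_succ']
    rw [if_pos rfl, add_zero]
    apply Finset.sum_congr rfl
    intro j hj
    rw [if_neg (Nat.succ_ne_zero j), Nat.add_sub_cancel]
    have heq : Ez (N+1) (j+1) = Ez N j := by unfold Ez; push_cast; ring
    rw [heq]
  -- second sum
  have h2 : ∑ j ∈ Finset.range (2*N+3), X ^ (Ez (N+1) j + 2*(j:ℤ)).toNat * Ag (2*N+1) j
      = X ^ (2*N+2) * ∑ j ∈ Finset.range (2*N+2), X ^ (Ez N j).toNat * Ag (2*N+1) j := by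
    rw [Finset.sum_range_succ, Ag_of_lt (2*N+1) (2*N+2) (by omega)]
    rw [mul_zero, add_zero]
    rw [← Finset.sum_range_reflect (fun j => X ^ (Ez (N+1) j + 2*(j:ℤ)).toNat * Ag (2*N+1) j) (2*N+2)]
    rw [Finset.mul_sum]
    apply Finset.sum_congr rfl
    intro j hj
    simp only [Finset.mem_range] at hj
    have hj' : j ≤ 2*N+1 := by omega
    have hsub : 2*N+2-1-j = 2*N+1 - j := by omega
    rw [hsub, Ag_symm (2*N+1) j hj']
    have hcast : ((2*N+1 - j : ℕ) : ℤ) = 2*N+1 - (j:ℤ) := by push_cast [Nat.cast_sub hj']; ring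
    have hexp : (Ez (N+1) (2*N+1-j) + 2*((2*N+1-j:ℕ):ℤ)).toNat
        = (2*N+2) + (Ez N j).toNat := by
      have heq : Ez (N+1) (2*N+1-j) + 2*((2*N+1-j:ℕ):ℤ) = Ez N j + ((2*N+2 : ℕ):ℤ) := by
        unfold Ez
        rw [hcast]
        push_cast
        ring
      rw [heq]
      have h0 := Ez_nonneg N j
      omega
    rw [hexp, pow_add]
    ring
  rw [h1, h2]
  ring

lemma S_prod : ∀ m : ℕ, S m = ∏ n ∈ Finset.range m, (1 + X ^ (n+1)) := by
  intro m
  induction m with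
  | zero => simpa using S_zero
  | succ m ih =>
    rcases Nat.even_or_odd m with ⟨N, hN⟩ | ⟨N, hN⟩
    · subst hN
      rw [show N + N = 2*N by ring] at ih ⊢
      rw [stepOdd N, ih]
      conv_rhs => rw [Finset.prod_range_succ]
      ring
    · subst hN
      rw [show 2*N+1+1 = 2*N+2 by ring, stepEven N, ih]
      conv_rhs => rw [show 2*N+2 = 2*N+1+1 by ring, Finset.prod_range_succ]
      ring

theorem stmt10 (N ν : ℕ) (hν : ν ≤ 1) (h : 0 < N + ν) :
    ∑ k ∈ Finset.Icc (-(N : ℤ)) ((N : ℤ) + ν),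
      Polynomial.X ^ (2 * k ^ 2 - k).toNat *
        Polynomial.aeval ((Polynomial.X : Polynomial ℚ) ^ 2)
          (gaussZ (2 * N + ν) ((N : ℤ) + k)) =
    ∏ n ∈ Finset.range (2 * N + ν), (1 + Polynomial.X ^ (n + 1)) := by
  rw [← S_prod, S, show (2*N+ν)/2 = N by omega]
  apply Finset.sum_nbij' (i := fun k : ℤ => (k + N).toNat) (j := fun j : ℕ => (j : ℤ) - N)
  · intro k hk
    simp only [Finset.mem_Icc] at hk
    simp only [Finset.mem_range]
    omega
  · intro j hj
    simp only [Finset.mem_range] at hj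
    simp only [Finset.mem_Icc]
    omega
  · intro k hk
    simp only [Finset.mem_Icc] at hk
    omega
  · intro j hj
    simp only [Finset.mem_range] at hj
    omega
  · intro k hk
    simp only [Finset.mem_Icc] at hk
    have hk0 : (0:ℤ) ≤ k + N := by omega
    have hcast : (((k + (N:ℤ)).toNat : ℕ) : ℤ) = k + N := Int.toNat_of_nonneg hk0
    have hE : Ez N (k + (N:ℤ)).toNat = 2*k^2 - k := by
      unfold Ez
      rw [hcast]
      ring
    have hG : gaussZ (2*N+ν) ((N:ℤ) + k) = gaussPoly (2*N+ν) ((k + (N:ℤ)).toNat) := by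
      rw [gaussZ, if_pos (by omega : (0:ℤ) ≤ (N:ℤ) + k)]
      congr 1
      omega
    rw [hE, hG, Ag]

end Aux
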